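/- Fix an integer p ≥ 1, a symmetric positive definite matrix Σ ∈ ℝ^{p×p}, a real τ > 0, and set n = tr((Σ + τ I)^{-1} Σ) and Ω = (1/n) tr(Σ² (Σ + τ I)^{-2}); assume 0 < Ω < 1. Fix β* ∈ ℝ^p and σ² ≥ 0, let θ₁ = (Σ + τ I)^{-1} Σ, and define the asymptotic surrogate-to-target risk R̄(b) = (b − β*)ᵀ θ₁ᵀ Σ θ₁ (b − β*) + γ²(b) · tr(Σ²(Σ+τI)^{-2})/p + β*ᵀ (I − θ₁)ᵀ Σ (I − θ₁) β* − 2 β*ᵀ (I − θ₁)ᵀ Σ θ₁ (b − β*), where γ²(b) = (p/n) · (σ² + τ² ‖(Σ + τ I)^{-1} Σ^{1/2} b‖²) / (1 − Ω). Then the vector β^{s*} = ((Σ + τ I)^{-1} Σ + (Ω τ² / (1 − Ω)) Σ^{-1} (Σ + τ I)^{-1})^{-1} β* is the unique global minimizer of R̄ over b ∈ ℝ^p. -/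

import Mathlib

open Matrix

section

open scoped ComplexOrder

/-- The positive semidefinite square root, as `Matrix.PosSemidef.sqrt` was defined in Mathlib
(Dec 2024); it has since been removed in favour of `CFC.sqrt`. -/
noncomputable def Matrix.PosSemidef.sqrt {n : Type*} [Fintype n] [DecidableEq n] {𝕜 : Type*}
    [RCLike 𝕜] {A : Matrix n n 𝕜} (hA : A.PosSemidef) : Matrix n n 𝕜 :=
  hA.1.eigenvectorUnitary.1 * diagonal ((↑) ∘ (√·) ∘ hA.1.eigenvalues) *
  (star hA.1.eigenvectorUnitary : Matrix n n 𝕜)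

end

section helpers
variable {p : ℕ}

private lemma dp_conj (E F : Matrix (Fin p) (Fin p) ℝ) (x y : Fin p → ℝ) :
    (E *ᵥ x) ⬝ᵥ (F *ᵥ y) = x ⬝ᵥ ((Eᵀ * F) *ᵥ y) := by
  rw [← mulVec_mulVec, dotProduct_mulVec x Eᵀ, vecMul_transpose]

private lemma dp_symm (M : Matrix (Fin p) (Fin p) ℝ) (hM : Mᵀ = M) (x y : Fin p → ℝ) :
    x ⬝ᵥ (M *ᵥ y) = y ⬝ᵥ (M *ᵥ x) := by
  rw [dotProduct_mulVec, ← hM, vecMul_transpose, dotProduct_comm, hM]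

private lemma smul_one_posSemidef {c : ℝ} (hc : 0 ≤ c) :
    ((c • (1 : Matrix (Fin p) (Fin p) ℝ))).PosSemidef := by
  refine PosSemidef.of_dotProduct_mulVec_nonneg ?_ ?_
  · unfold Matrix.IsHermitian; simp
  · intro x
    simp only [smul_mulVec, one_mulVec, dotProduct_smul, smul_eq_mul]
    exact mul_nonneg hc (dotProduct_star_self_nonneg x)

private lemma smul_one_posDef {c : ℝ} (hc : 0 < c) :
    ((c • (1 : Matrix (Fin p) (Fin p) ℝ))).PosDef := by
  refine PosDef.of_dotProduct_mulVec_pos ?_ ?_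
  · unfold Matrix.IsHermitian; simp
  · intro x hx
    simp only [smul_mulVec, one_mulVec, dotProduct_smul, smul_eq_mul]
    exact mul_pos hc (dotProduct_star_self_pos_iff.mpr hx)

private lemma smul_posSemidef {c : ℝ} (hc : 0 ≤ c) {M : Matrix (Fin p) (Fin p) ℝ}
    (hM : M.PosSemidef) : (c • M).PosSemidef := by
  refine PosSemidef.of_dotProduct_mulVec_nonneg ?_ ?_
  · rw [Matrix.IsHermitian, conjTranspose_smul, hM.1.eq, star_trivial]
  · intro x
    simp only [smul_mulVec, dotProduct_smul, smul_eq_mul]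
    exact mul_nonneg hc (hM.dotProduct_mulVec_nonneg x)

private lemma conj_posDef {A B : Matrix (Fin p) (Fin p) ℝ} (hA : A.PosDef)
    (hB : IsUnit B) : (Bᵀ * A * B).PosDef := by
  refine PosDef.of_dotProduct_mulVec_pos ?_ ?_
  · rw [← conjTranspose_eq_transpose_of_trivial]
    exact isHermitian_conjTranspose_mul_mul B hA.isHermitian
  · intro x hx
    have hx' : B *ᵥ x ≠ 0 :=
      (Matrix.mulVec_injective_iff_isUnit.mpr hB |>.ne_iff' (by simp)).2 hx
    have := hA.dotProduct_mulVec_pos hx'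
    calc 0 < star (B *ᵥ x) ⬝ᵥ (A *ᵥ (B *ᵥ x)) := this
      _ = star x ⬝ᵥ ((Bᵀ * A * B) *ᵥ x) := by
          simp only [star_trivial]
          rw [dp_conj, mulVec_mulVec]

private lemma psd_sqrt_mul_self {A : Matrix (Fin p) (Fin p) ℝ} (hA : A.PosSemidef) :
    hA.sqrt * hA.sqrt = A := by
  have hU : star (hA.1.eigenvectorUnitary : Matrix (Fin p) (Fin p) ℝ) *
      (hA.1.eigenvectorUnitary : Matrix (Fin p) (Fin p) ℝ) = 1 :=
    Matrix.UnitaryGroup.star_mul_self _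
  conv_rhs => rw [hA.1.spectral_theorem, Unitary.conjStarAlgAut_apply]
  unfold Matrix.PosSemidef.sqrt
  simp only [mul_assoc]
  rw [← mul_assoc (star _) (hA.1.eigenvectorUnitary : Matrix (Fin p) (Fin p) ℝ), hU, one_mul,
    ← mul_assoc (diagonal _) (diagonal _), diagonal_mul_diagonal]
  congr 2
  congr 1
  funext i
  simp [Real.mul_self_sqrt (hA.eigenvalues_nonneg i)]

private lemma psd_sqrt_posSemidef {A : Matrix (Fin p) (Fin p) ℝ} (hA : A.PosSemidef) :
    hA.sqrt.PosSemidef := by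
  have hd := (PosSemidef.diagonal (d := ((↑) ∘ (√·) ∘ hA.1.eigenvalues : Fin p → ℝ))
      (Pi.le_def.mpr fun i => by simp [Real.sqrt_nonneg])).conjTranspose_mul_mul_same
      (star (hA.1.eigenvectorUnitary : Matrix (Fin p) (Fin p) ℝ))
  unfold Matrix.PosSemidef.sqrt
  convert hd using 2
  simp [Matrix.star_eq_conjTranspose]
  rfl

end helpers

theorem optimal_surrogate_unique_minimizer
    (p : ℕ) (hp : 1 ≤ p)
    (Cov : Matrix (Fin p) (Fin p) ℝ) (hCov : Cov.PosDef)
    (τ : ℝ) (hτ : 0 < τ)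
    (n Ω : ℝ)
    (hn : n = ((Cov + τ • (1 : Matrix (Fin p) (Fin p) ℝ))⁻¹ * Cov).trace)
    (hΩ : Ω = (1 / n) * (Cov ^ 2 * ((Cov + τ • (1 : Matrix (Fin p) (Fin p) ℝ))⁻¹) ^ 2).trace)
    (hΩ0 : 0 < Ω) (hΩ1 : Ω < 1)
    (βstar : Fin p → ℝ) (σsq : ℝ) (hσ : 0 ≤ σsq)
    (θ1 : Matrix (Fin p) (Fin p) ℝ)
    (hθ1 : θ1 = (Cov + τ • (1 : Matrix (Fin p) (Fin p) ℝ))⁻¹ * Cov)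
    (γsq : (Fin p → ℝ) → ℝ)
    (hγ : ∀ b : Fin p → ℝ, γsq b = ((p : ℝ) / n) * (σsq + τ ^ 2 *
      ((((Cov + τ • (1 : Matrix (Fin p) (Fin p) ℝ))⁻¹ * hCov.posSemidef.sqrt).mulVec b) ⬝ᵥ
       (((Cov + τ • (1 : Matrix (Fin p) (Fin p) ℝ))⁻¹ * hCov.posSemidef.sqrt).mulVec b))) / (1 - Ω))
    (Rbar : (Fin p → ℝ) → ℝ)
    (hR : ∀ b : Fin p → ℝ, Rbar b =
      (θ1.mulVec (b - βstar)) ⬝ᵥ (Cov.mulVec (θ1.mulVec (b - βstar)))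
      + γsq b * (Cov ^ 2 * ((Cov + τ • (1 : Matrix (Fin p) (Fin p) ℝ))⁻¹) ^ 2).trace / p
      + ((1 - θ1).mulVec βstar) ⬝ᵥ (Cov.mulVec ((1 - θ1).mulVec βstar))
      - 2 * (((1 - θ1).mulVec βstar) ⬝ᵥ (Cov.mulVec (θ1.mulVec (b - βstar)))))
    (βs : Fin p → ℝ)
    (hβs : βs = (((Cov + τ • (1 : Matrix (Fin p) (Fin p) ℝ))⁻¹ * Cov
        + (Ω * τ ^ 2 / (1 - Ω)) • (Cov⁻¹ * (Cov + τ • (1 : Matrix (Fin p) (Fin p) ℝ))⁻¹))⁻¹).mulVec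
        βstar) :
    ∀ b : Fin p → ℝ, b ≠ βs → Rbar βs < Rbar b := by
  intro b hb
  -- basic scalars
  have h1Ω : 0 < 1 - Ω := by linarith
  have hnne : n ≠ 0 := by
    intro h
    rw [h] at hΩ
    simp at hΩ
    rw [hΩ] at hΩ0
    exact lt_irrefl 0 hΩ0
  have hpne : (p : ℝ) ≠ 0 := by positivity
  set c : ℝ := Ω * τ ^ 2 / (1 - Ω) with hcdef
  have hc : 0 < c := div_pos (mul_pos hΩ0 (pow_pos hτ 2)) h1Ω
  -- matrices
  set A : Matrix (Fin p) (Fin p) ℝ := Cov + τ • (1 : Matrix (Fin p) (Fin p) ℝ) with hAdef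
  have hA : A.PosDef := hCov.add_posSemidef (smul_one_posSemidef hτ.le)
  set S : Matrix (Fin p) (Fin p) ℝ := hCov.posSemidef.sqrt with hSdef
  have hSS : S * S = Cov := psd_sqrt_mul_self hCov.posSemidef
  have hSps : S.PosSemidef := psd_sqrt_posSemidef hCov.posSemidef
  -- symmetry
  have hCT : Covᵀ = Cov := by
    rw [← conjTranspose_eq_transpose_of_trivial]; exact hCov.isHermitian.eq
  have hAT : Aᵀ = A := by
    rw [← conjTranspose_eq_transpose_of_trivial]; exact hA.isHermitian.eq
  have hST : Sᵀ = S := by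
    rw [← conjTranspose_eq_transpose_of_trivial]; exact hSps.isHermitian.eq
  have hAiT : (A⁻¹)ᵀ = A⁻¹ := by rw [transpose_nonsing_inv, hAT]
  -- invertibility
  have hAd : IsUnit A.det := hA.det_pos.ne'.isUnit
  have hCd : IsUnit Cov.det := hCov.det_pos.ne'.isUnit
  have hSd : IsUnit S.det := by
    have : S.det * S.det = Cov.det := by rw [← det_mul, hSS]
    exact isUnit_of_mul_isUnit_left (this ▸ hCd)
  have hCCi : Cov * Cov⁻¹ = 1 := mul_nonsing_inv Cov hCd
  have hCiC : Cov⁻¹ * Cov = 1 := nonsing_inv_mul Cov hCd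
  have hAAi : A * A⁻¹ = 1 := mul_nonsing_inv A hAd
  have hAiA : A⁻¹ * A = 1 := nonsing_inv_mul A hAd
  -- commutation
  have cCA : Cov * A = A * Cov := by
    rw [hAdef, mul_add, add_mul, mul_smul_comm, smul_mul_assoc, mul_one, one_mul]
  have cCAi : Cov * A⁻¹ = A⁻¹ * Cov := by
    letI := A.invertibleOfIsUnitDet hAd
    rw [← Matrix.invOf_eq_nonsing_inv]
    exact (Commute.invOf_right cCA).eq
  have cSA : S * A = A * S := by
    rw [hAdef, ← hSS, mul_add, add_mul, mul_smul_comm, smul_mul_assoc, mul_one, one_mul,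
      mul_assoc]
  have cSAi : S * A⁻¹ = A⁻¹ * S := by
    letI := A.invertibleOfIsUnitDet hAd
    rw [← Matrix.invOf_eq_nonsing_inv]
    exact (Commute.invOf_right cSA).eq
  have cCiAi : Cov⁻¹ * A⁻¹ = A⁻¹ * Cov⁻¹ := by
    rw [← Matrix.mul_inv_rev, ← cCA, Matrix.mul_inv_rev]
  -- sorted-rewrite helpers
  have sCA : ∀ X, Cov * (A⁻¹ * X) = A⁻¹ * (Cov * X) := fun X => by
    rw [← mul_assoc, cCAi, mul_assoc]
  have sSA : ∀ X, S * (A⁻¹ * X) = A⁻¹ * (S * X) := fun X => by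
    rw [← mul_assoc, cSAi, mul_assoc]
  have sCiA : ∀ X, Cov⁻¹ * (A⁻¹ * X) = A⁻¹ * (Cov⁻¹ * X) := fun X => by
    rw [← mul_assoc, cCiAi, mul_assoc]
  have sCCi : ∀ X, Cov * (Cov⁻¹ * X) = X := fun X => by
    rw [← mul_assoc, hCCi, one_mul]
  have sCiC : ∀ X, Cov⁻¹ * (Cov * X) = X := fun X => by
    rw [← mul_assoc, hCiC, one_mul]
  have sSS : ∀ X, S * (S * X) = Cov * X := fun X => by
    rw [← mul_assoc, hSS]
  -- θ1
  have hθ1' : θ1 = A⁻¹ * Cov := hθ1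
  have hθ1T : θ1ᵀ = Cov * A⁻¹ := by rw [hθ1', transpose_mul, hCT, hAiT]
  have hθ1u : IsUnit θ1 := by rw [hθ1']; exact (hA.inv.isUnit).mul hCov.isUnit
  -- the quadratic-form matrices
  set M : Matrix (Fin p) (Fin p) ℝ := θ1ᵀ * Cov * θ1 with hMdef
  set N : Matrix (Fin p) (Fin p) ℝ := (A⁻¹ * S)ᵀ * (A⁻¹ * S) with hNdef
  set K : Matrix (Fin p) (Fin p) ℝ := (1 - θ1)ᵀ * (Cov * θ1) with hKdef
  set G : Matrix (Fin p) (Fin p) ℝ := A⁻¹ * Cov + c • (Cov⁻¹ * A⁻¹) with hGdef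
  set P : Matrix (Fin p) (Fin p) ℝ := M + c • N with hPdef
  have hMsym : Mᵀ = M := by
    rw [hMdef, transpose_mul, transpose_mul, hCT, transpose_transpose, mul_assoc]
  have hNsym : Nᵀ = N := by
    rw [hNdef, transpose_mul, transpose_transpose]
  have hNps : N.PosSemidef := by
    rw [hNdef, ← conjTranspose_eq_transpose_of_trivial]
    exact posSemidef_conjTranspose_mul_self _
  have hMpd : M.PosDef := conj_posDef hCov hθ1u
  have hPpd : P.PosDef := hMpd.add_posSemidef (smul_posSemidef hc.le hNps)
  -- canonical form of N
  have hNalt : N = A⁻¹ * (A⁻¹ * Cov) := by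
    rw [hNdef, transpose_mul, hST, hAiT, mul_assoc]
    rw [sSA, sSA, hSS]
  -- G is invertible
  have e1 : (Cov⁻¹ * A⁻¹) * (Cov * Cov) = A⁻¹ * Cov := by
    rw [mul_assoc, sCiA, sCiC]
  have hGfact : G = (Cov⁻¹ * A⁻¹) * (Cov ^ 2 + c • (1 : Matrix (Fin p) (Fin p) ℝ)) := by
    rw [hGdef, pow_two, mul_add, mul_smul_comm, mul_one, e1]
  have hGd : IsUnit G.det := by
    rw [hGfact]
    have hQ : (Cov ^ 2 + c • (1 : Matrix (Fin p) (Fin p) ℝ)).PosDef :=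
      Matrix.PosDef.posSemidef_add (hCov.posSemidef.pow 2) (smul_one_posDef hc)
    rw [det_mul, det_mul]
    exact ((hCov.inv.det_pos.ne'.isUnit).mul (hA.inv.det_pos.ne'.isUnit)).mul
      hQ.det_pos.ne'.isUnit
  have hGGi : G * G⁻¹ = 1 := mul_nonsing_inv G hGd
  -- key matrix identity
  have e2 : (θ1ᵀ * Cov) * (Cov⁻¹ * A⁻¹) = A⁻¹ * (A⁻¹ * Cov) := by
    rw [hθ1T]
    simp only [mul_assoc]
    rw [sCCi, sCA, cCAi]
  have hPG : P = (θ1ᵀ * Cov) * G := by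
    rw [hPdef, hGdef, mul_add, mul_smul_comm, e2, hNalt]
    congr 1
    rw [hMdef, ← hθ1']
  -- stationarity
  have hβs' : βs = G⁻¹ *ᵥ βstar := hβs
  have hstat : P *ᵥ βs = (θ1ᵀ * Cov) *ᵥ βstar := by
    rw [hβs', mulVec_mulVec, hPG, mul_assoc, hGGi, mul_one]
  have hMK : M + Kᵀ = θ1ᵀ * Cov := by
    rw [hMdef, hKdef, transpose_mul, transpose_transpose]
    rw [transpose_mul, hCT]
    noncomm_ring
  -- scalar form of Rbar
  have hT : (Cov ^ 2 * (A⁻¹) ^ 2).trace = n * Ω := by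
    rw [hΩ]; field_simp
  set κ : ℝ := Ω * σsq / (1 - Ω)
      + ((1 - θ1) *ᵥ βstar) ⬝ᵥ ((Cov * (1 - θ1)) *ᵥ βstar) with hκdef
  have hRform : ∀ x : Fin p → ℝ, Rbar x =
      (x - βstar) ⬝ᵥ (M *ᵥ (x - βstar)) + c * (x ⬝ᵥ (N *ᵥ x))
        - 2 * (βstar ⬝ᵥ (K *ᵥ (x - βstar))) + κ := by
    intro x
    rw [hR x, hγ x]
    rw [mulVec_mulVec, dp_conj θ1 (Cov * θ1) (x - βstar) (x - βstar), ← mul_assoc]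
    rw [dp_conj (A⁻¹ * S) (A⁻¹ * S) x x]
    rw [mulVec_mulVec, dp_conj (1 - θ1) (Cov * θ1) βstar (x - βstar)]
    rw [hT, hκdef]
    have : ∀ q : ℝ, ((p : ℝ) / n) * (σsq + τ ^ 2 * q) / (1 - Ω) * (n * Ω) / p
        = c * q + Ω * σsq / (1 - Ω) := by
      intro q
      rw [hcdef]
      field_simp
      ring
    rw [this]
    ring
  -- the zero gradient fact
  have hzero : ∀ u : Fin p → ℝ,
      u ⬝ᵥ (M *ᵥ (βs - βstar)) + c * (u ⬝ᵥ (N *ᵥ βs)) - βstar ⬝ᵥ (K *ᵥ u) = 0 := by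
    intro u
    have h1 : βstar ⬝ᵥ (K *ᵥ u) = u ⬝ᵥ (Kᵀ *ᵥ βstar) := by
      rw [dotProduct_mulVec, ← mulVec_transpose, dotProduct_comm]
    rw [h1]
    have h2 : M *ᵥ (βs - βstar) + c • (N *ᵥ βs) - Kᵀ *ᵥ βstar = 0 := by
      have : M *ᵥ (βs - βstar) + c • (N *ᵥ βs) = P *ᵥ βs - M *ᵥ βstar := by
        rw [hPdef, add_mulVec, mulVec_sub, smul_mulVec]
        abel
      rw [this, hstat, ← hMK, add_mulVec]
      abel
    calc u ⬝ᵥ (M *ᵥ (βs - βstar)) + c * (u ⬝ᵥ (N *ᵥ βs)) - u ⬝ᵥ (Kᵀ *ᵥ βstar)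
        = u ⬝ᵥ (M *ᵥ (βs - βstar) + c • (N *ᵥ βs) - Kᵀ *ᵥ βstar) := by
          rw [dotProduct_sub, dotProduct_add, dotProduct_smul, smul_eq_mul]
      _ = 0 := by rw [h2, dotProduct_zero]
  -- the difference identity
  have hdiff : Rbar b - Rbar βs = (b - βs) ⬝ᵥ (P *ᵥ (b - βs)) := by
    have hbb2 : b - βstar = (b - βs) + (βs - βstar) := by abel
    have hbb : b = (b - βs) + βs := by abel
    rw [hRform b, hRform βs, hbb2]
    nth_rewrite 3 [hbb]
    nth_rewrite 4 [hbb]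
    simp only [hPdef, add_mulVec, mulVec_add, dotProduct_add, add_dotProduct,
      smul_mulVec, dotProduct_smul, smul_eq_mul]
    rw [dp_symm M hMsym (βs - βstar) (b - βs), dp_symm N hNsym βs (b - βs)]
    linear_combination 2 * hzero (b - βs)
  -- conclude
  have hd : b - βs ≠ 0 := sub_ne_zero.mpr hb
  have := hPpd.dotProduct_mulVec_pos hd
  rw [star_trivial] at this
  linarith [hdiff ▸ this]
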